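/- Concentration of the memory size: for any x ∈ [0,1], ℓ ≥ 1, and λ > 0, the probability that s(x,ℓ) deviates from its expectation by more than λ√ℓ is at most 2·exp(−λ²/8). -/

import Mathlib

open MeasureTheory ProbabilityTheory Finset

noncomputable section

/-- One step of the forgetting process: the new point `x` joins `S`; if `x` is strictly
larger than the current minimum of `S`, that minimum is removed. -/
def forgetStep (S : Finset ℝ) (x : ℝ) : Finset ℝ :=
  if h : S.Nonempty then
    if S.min' h < x then insert x (S.erase (S.min' h)) else insert x S
  else insert x S

/-- The memory after `n` steps, starting from the set `T`, with inputs `xs 0, xs 1, …`. -/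
def forgetMem (T : Finset ℝ) (xs : ℕ → ℝ) : ℕ → Finset ℝ
  | 0 => T
  | n + 1 => forgetStep (forgetMem T xs n) (xs n)

/-- `sCount xs x ℓ` : number of elements of the memory lying in `[0, x]` after `ℓ` steps,
starting from `S = {0}`. -/
def sCount (xs : ℕ → ℝ) (x : ℝ) (ℓ : ℕ) : ℕ :=
  ((forgetMem {0} xs ℓ).filter (· ≤ x)).card

/-- The branching weight `W(z,n) = Σ_{x ∈ S(z,n)} 1/(1-x)`, the sum over memory elements
strictly below `z` at time `n`. -/
def Wproc (xs : ℕ → ℝ) (z : ℝ) (n : ℕ) : ℝ :=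
  ∑ x ∈ (forgetMem {0} xs n).filter (· < z), 1 / (1 - x)

/-- `Z(z,n) = Σ_{k=1}^n W(z,k)·1{W(z,k-1)=0}`. -/
def Zproc (xs : ℕ → ℝ) (z : ℝ) (n : ℕ) : ℝ :=
  ∑ k ∈ Finset.range n, if Wproc xs z k = 0 then Wproc xs z (k + 1) else 0

/-- `X(z,n) = W(z,n) - Z(z,n)`. -/
def Xproc (xs : ℕ → ℝ) (z : ℝ) (n : ℕ) : ℝ :=
  Wproc xs z n - Zproc xs z n

/-- the minimum of the memory at time `n` (with junk value `0` if the memory were empty). -/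
def mminProc (xs : ℕ → ℝ) (n : ℕ) : ℝ :=
  WithTop.untopD 0 (forgetMem {0} xs n).min

/-- the critical point `z₀ = 1 - 1/e`. -/
def critPoint : ℝ := 1 - (Real.exp 1)⁻¹

/-- The σ-algebra generated by the first `n` inputs `X 0, …, X (n-1)`. -/
def natSigma {Ω : Type*} [MeasurableSpace Ω] (X : ℕ → Ω → ℝ) (n : ℕ) : MeasurableSpace Ω :=
  ⨆ i ∈ Finset.range n, MeasurableSpace.comap (X i) inferInstance

/-- The natural filtration `F_n = σ(x_1, …, x_n)` of the input sequence. -/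
def natFilt {Ω : Type*} [m0 : MeasurableSpace Ω] (X : ℕ → Ω → ℝ)
    (hX : ∀ i, Measurable (X i)) : Filtration ℕ m0 where
  seq n := natSigma X n
  mono' n m hnm := biSup_mono fun i hi => Finset.mem_range.2 ((Finset.mem_range.1 hi).trans_le hnm)
  le' n := iSup₂_le fun i _ => measurable_iff_comap_le.1 (hX i)

/-- The input sequence is i.i.d. uniform on `[0,1]`. -/
def IsUnifIID {Ω : Type*} [MeasurableSpace Ω] (μ : Measure Ω) (X : ℕ → Ω → ℝ) : Prop :=
  (∀ i, Measurable (X i)) ∧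
    iIndepFun X μ ∧
    ∀ i, Measure.map (X i) μ = volume.restrict (Set.Icc (0 : ℝ) 1)

end

section Comb

lemma forgetStep_eq (S : Finset ℝ) (h : S.Nonempty) (x : ℝ) :
    forgetStep S x = insert x (if S.min' h < x then S.erase (S.min' h) else S) := by
  rw [forgetStep, dif_pos h]
  split_ifs <;> rfl

lemma forgetStep_nonempty (S : Finset ℝ) (x : ℝ) : (forgetStep S x).Nonempty := by
  rw [forgetStep]
  split_ifs <;> exact insert_nonempty _ _

lemma forgetMem_nonempty (xs : ℕ → ℝ) (n : ℕ) : (forgetMem {0} xs n).Nonempty := by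
  cases n with
  | zero => exact ⟨0, by simp [forgetMem]⟩
  | succ n => exact forgetStep_nonempty _ _

lemma forgetStep_subset (S : Finset ℝ) (x : ℝ) : forgetStep S x ⊆ insert x S := by
  rw [forgetStep]
  split_ifs with h h2
  · exact insert_subset_insert _ (erase_subset _ _)
  · exact Finset.Subset.refl _
  · exact Finset.Subset.refl _

lemma erase_min_subset_forgetStep (S : Finset ℝ) (h : S.Nonempty) (x : ℝ) :
    S.erase (S.min' h) ⊆ forgetStep S x := by
  rw [forgetStep_eq S h x]
  split_ifs with h2
  · exact subset_insert _ _
  · exact (erase_subset _ _).trans (subset_insert _ _)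

/-- key step lemma: the difference cardinality is non-increasing under coupled steps. -/
lemma card_sdiff_forgetStep_le (S T : Finset ℝ) (hS : S.Nonempty) (hT : T.Nonempty) (x : ℝ) :
    ((forgetStep S x) \ (forgetStep T x)).card ≤ (S \ T).card := by
  set m := S.min' hS with hm
  set m' := T.min' hT with hm'
  set S₁ := if S.min' hS < x then S.erase (S.min' hS) else S with hS₁
  set T₁ := if T.min' hT < x then T.erase (T.min' hT) else T with hT₁
  rw [forgetStep_eq S hS x, forgetStep_eq T hT x]
  have h1 : (insert x S₁ \ insert x T₁) ⊆ S₁ \ T₁ := by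
    intro a ha
    rw [mem_sdiff, mem_insert, mem_insert] at ha
    push_neg at ha
    exact mem_sdiff.2 ⟨ha.1.resolve_left ha.2.1, ha.2.2⟩
  refine (card_le_card h1).trans ?_
  by_cases hTx : T.min' hT < x
  · rw [hT₁, if_pos hTx]
    by_cases hm'S : T.min' hT ∈ S
    · -- m' ∈ S, so min' S ≤ m' < x and S erases its min too
      have hSx : S.min' hS < x := lt_of_le_of_lt (S.min'_le _ hm'S) hTx
      rw [hS₁, if_pos hSx]
      by_cases heq : S.min' hS = T.min' hT
      · refine card_le_card ?_
        intro a ha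
        rw [mem_sdiff, mem_erase, mem_erase] at ha
        push_neg at ha
        rw [heq] at ha
        exact mem_sdiff.2 ⟨ha.1.2, ha.2 ha.1.1⟩
      · -- m < m' strictly; m ∉ T
        have hmm' : S.min' hS < T.min' hT :=
          lt_of_le_of_ne (S.min'_le _ hm'S) heq
        have hmT : S.min' hS ∉ T := fun hmem =>
          absurd (T.min'_le _ hmem) (not_le.2 hmm')
        have hsub : (S.erase (S.min' hS)) \ (T.erase (T.min' hT)) ⊆
            insert (T.min' hT) ((S \ T).erase (S.min' hS)) := by
          intro a ha
          rw [mem_sdiff, mem_erase, mem_erase] at ha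
          push_neg at ha
          rcases eq_or_ne a (T.min' hT) with h | h
          · exact h ▸ mem_insert_self _ _
          · exact mem_insert_of_mem (mem_erase.2 ⟨ha.1.1, mem_sdiff.2 ⟨ha.1.2, ha.2 h⟩⟩)
        refine (card_le_card hsub).trans ?_
        have hmem : S.min' hS ∈ S \ T := mem_sdiff.2 ⟨S.min'_mem hS, hmT⟩
        have hpos : 0 < (S \ T).card := card_pos.2 ⟨_, hmem⟩
        calc (insert (T.min' hT) ((S \ T).erase (S.min' hS))).card
            ≤ ((S \ T).erase (S.min' hS)).card + 1 := card_insert_le _ _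
          _ = ((S \ T).card - 1) + 1 := by rw [card_erase_of_mem hmem]
          _ = (S \ T).card := by omega
    · -- m' ∉ S
      refine card_le_card ?_
      intro a ha
      rw [mem_sdiff, mem_erase] at ha
      push_neg at ha
      have haS : a ∈ S := by
        have := ha.1
        rw [hS₁] at this
        split_ifs at this with h
        · exact mem_of_mem_erase this
        · exact this
      have hne : a ≠ T.min' hT := fun h => hm'S (h ▸ haS)
      exact mem_sdiff.2 ⟨haS, ha.2 hne⟩
  · -- T doesn't erase
    rw [hT₁, if_neg hTx]
    refine card_le_card ?_
    intro a ha
    rw [mem_sdiff] at ha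
    have haS : a ∈ S := by
      have := ha.1
      rw [hS₁] at this
      split_ifs at this with h
      · exact mem_of_mem_erase this
      · exact this
    exact mem_sdiff.2 ⟨haS, ha.2⟩

lemma card_sdiff_split_le (U : Finset ℝ) (hU : U.Nonempty) (x y : ℝ) :
    ((forgetStep U x) \ (forgetStep U y)).card ≤ 2 := by
  have h1 : (forgetStep U x) \ (forgetStep U y) ⊆ insert x {U.min' hU} := by
    intro a ha
    rw [mem_sdiff] at ha
    have haS := forgetStep_subset U x ha.1
    rw [mem_insert] at haS
    rcases haS with h | h
    · exact h ▸ mem_insert_self _ _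
    · refine mem_insert_of_mem (mem_singleton.2 ?_)
      by_contra hne
      exact ha.2 (erase_min_subset_forgetStep U hU y (mem_erase.2 ⟨hne, h⟩))
  exact (card_le_card h1).trans ((card_insert_le _ _).trans (by simp))

lemma forgetMem_congr (T : Finset ℝ) (xs ys : ℕ → ℝ) (n : ℕ) (h : ∀ i < n, xs i = ys i) :
    forgetMem T xs n = forgetMem T ys n := by
  induction n with
  | zero => rfl
  | succ n ih =>
    rw [forgetMem, forgetMem, ih (fun i hi => h i (Nat.lt_succ_of_lt hi)),
      h n (Nat.lt_succ_self n)]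

lemma forgetMem_lipschitz (xs ys : ℕ → ℝ) (k : ℕ) (h : ∀ i, i ≠ k → xs i = ys i) (n : ℕ) :
    ((forgetMem {0} xs n) \ (forgetMem {0} ys n)).card ≤ 2 ∧
    ((forgetMem {0} ys n) \ (forgetMem {0} xs n)).card ≤ 2 := by
  induction n with
  | zero => simp [forgetMem]
  | succ n ih =>
    rcases lt_trichotomy n k with hnk | hnk | hnk
    · have heq : forgetMem {0} xs (n+1) = forgetMem {0} ys (n+1) :=
        forgetMem_congr _ _ _ _ (fun i hi => h i (by omega))
      rw [heq]
      simp
    · have heq : forgetMem {0} xs n = forgetMem {0} ys n :=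
        forgetMem_congr _ _ _ _ (fun i hi => h i (by omega))
      rw [forgetMem, forgetMem, ← heq]
      exact ⟨card_sdiff_split_le _ (forgetMem_nonempty xs n) _ _,
        by rw [heq]; exact card_sdiff_split_le _ (forgetMem_nonempty ys n) _ _⟩
    · rw [forgetMem, forgetMem, h n (by omega)]
      exact ⟨(card_sdiff_forgetStep_le _ _ (forgetMem_nonempty xs n)
          (forgetMem_nonempty ys n) _).trans ih.1,
        (card_sdiff_forgetStep_le _ _ (forgetMem_nonempty ys n)
          (forgetMem_nonempty xs n) _).trans ih.2⟩

lemma card_filter_le_of_sdiff (S T : Finset ℝ) (p : ℝ → Prop) [DecidablePred p] :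
    (S.filter p).card ≤ (T.filter p).card + (S \ T).card := by
  have h : S.filter p ⊆ (T.filter p) ∪ (S \ T) := by
    intro a ha
    rw [mem_filter] at ha
    by_cases haT : a ∈ T
    · exact mem_union_left _ (mem_filter.2 ⟨haT, ha.2⟩)
    · exact mem_union_right _ (mem_sdiff.2 ⟨ha.1, haT⟩)
  exact (card_le_card h).trans (card_union_le _ _)

lemma sCount_lipschitz (xs ys : ℕ → ℝ) (k : ℕ) (h : ∀ i, i ≠ k → xs i = ys i)
    (x : ℝ) (ℓ : ℕ) :
    |(sCount xs x ℓ : ℝ) - (sCount ys x ℓ : ℝ)| ≤ 2 := by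
  have hl := forgetMem_lipschitz xs ys k h ℓ
  have h1 : sCount xs x ℓ ≤ sCount ys x ℓ + 2 :=
    (card_filter_le_of_sdiff (forgetMem {0} xs ℓ) (forgetMem {0} ys ℓ) (· ≤ x)).trans
      (Nat.add_le_add_left hl.1 _)
  have h2 : sCount ys x ℓ ≤ sCount xs x ℓ + 2 :=
    (card_filter_le_of_sdiff (forgetMem {0} ys ℓ) (forgetMem {0} xs ℓ) (· ≤ x)).trans
      (Nat.add_le_add_left hl.2 _)
  have h1' : (sCount xs x ℓ : ℝ) ≤ (sCount ys x ℓ : ℝ) + 2 := by exact_mod_cast h1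
  have h2' : (sCount ys x ℓ : ℝ) ≤ (sCount xs x ℓ : ℝ) + 2 := by exact_mod_cast h2
  rw [abs_sub_le_iff]
  constructor <;> linarith

end Comb


section Meas

open Finset

variable {L : ℕ}

noncomputable section

/-- extension of a finite tuple to `ℕ → ℝ` by zero. -/
def extV (v : Fin L → ℝ) : ℕ → ℝ := fun i => if h : i < L then v ⟨i, h⟩ else 0

/-- the memory as a function of the tuple. -/
def MV (v : Fin L → ℝ) (n : ℕ) : Finset ℝ := forgetMem {0} (extV v) n

/-- value selector: `none ↦ 0`, `some i ↦ v i`. -/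
def YV (o : Option (Fin L)) (v : Fin L → ℝ) : ℝ := o.elim 0 (fun i => v i)

end

lemma measurable_YV (o : Option (Fin L)) : Measurable (YV o) := by
  cases o with
  | none => exact measurable_const
  | some i => exact measurable_pi_apply i

lemma measurable_extV (n : ℕ) : Measurable (fun v : Fin L → ℝ => extV v n) := by
  unfold extV
  by_cases h : n < L
  · simp only [dif_pos h]; exact measurable_pi_apply _
  · simp only [dif_neg h]; exact measurable_const

lemma mem_forgetStep_iff (S : Finset ℝ) (h : S.Nonempty) (x y : ℝ) :
    y ∈ forgetStep S x ↔ y = x ∨ (y ∈ S ∧ ¬(y < x ∧ ∀ z ∈ S, y ≤ z)) := by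
  rw [forgetStep_eq S h x]
  split_ifs with hmin
  · rw [mem_insert, mem_erase]
    constructor
    · rintro (rfl | ⟨hne, hyS⟩)
      · exact Or.inl rfl
      · refine Or.inr ⟨hyS, fun ⟨hyx, hall⟩ => hne ?_⟩
        exact le_antisymm (hall _ (S.min'_mem h)) (S.min'_le _ hyS)
    · rintro (rfl | ⟨hyS, hnot⟩)
      · exact Or.inl rfl
      · refine Or.inr ⟨fun heq => hnot ⟨heq ▸ hmin, fun z hz => heq ▸ S.min'_le _ hz⟩, hyS⟩
  · rw [mem_insert]
    constructor
    · rintro (rfl | hyS)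
      · exact Or.inl rfl
      · exact Or.inr ⟨hyS, fun ⟨hyx, _⟩ => hmin ((S.min'_le _ hyS).trans_lt hyx)⟩
    · rintro (rfl | ⟨hyS, _⟩)
      · exact Or.inl rfl
      · exact Or.inr hyS

lemma forgetMem_subset (xs : ℕ → ℝ) (n : ℕ) :
    forgetMem {0} xs n ⊆ insert 0 ((Finset.range n).image xs) := by
  induction n with
  | zero => simp [forgetMem]
  | succ n ih =>
    refine (forgetStep_subset _ _).trans ?_
    intro a ha
    rw [mem_insert] at ha
    rcases ha with rfl | ha
    · exact mem_insert_of_mem (mem_image.2 ⟨n, mem_range.2 (Nat.lt_succ_self n), rfl⟩)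
    · rcases mem_insert.1 (ih ha) with rfl | ha'
      · exact mem_insert_self _ _
      · rcases mem_image.1 ha' with ⟨j, hj, rfl⟩
        exact mem_insert_of_mem
          (mem_image.2 ⟨j, mem_range.2 ((mem_range.1 hj).trans (Nat.lt_succ_self n)), rfl⟩)

lemma mem_MV_cases {v : Fin L → ℝ} {n : ℕ} {z : ℝ} (hz : z ∈ MV v n) :
    z = 0 ∨ ∃ j : Fin L, z = v j := by
  rcases mem_insert.1 (forgetMem_subset (extV v) n hz) with rfl | h
  · exact Or.inl rfl
  · rcases mem_image.1 h with ⟨j, _, rfl⟩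
    unfold extV
    by_cases hj : j < L
    · exact Or.inr ⟨⟨j, hj⟩, by simp [hj]⟩
    · exact Or.inl (by simp [hj])

lemma min_char {v : Fin L → ℝ} {n : ℕ} {y : ℝ} :
    (∀ z ∈ MV v n, y ≤ z) ↔ ∀ o : Option (Fin L), YV o v ∈ MV v n → y ≤ YV o v := by
  constructor
  · exact fun h o ho => h _ ho
  · intro h z hz
    rcases mem_MV_cases hz with rfl | ⟨j, rfl⟩
    · exact h none hz
    · exact h (some j) hz

lemma measurableSet_mem_MV (n : ℕ) (o : Option (Fin L)) :
    MeasurableSet {v : Fin L → ℝ | YV o v ∈ MV v n} := by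
  induction n generalizing o with
  | zero =>
    have : {v : Fin L → ℝ | YV o v ∈ MV v 0} = {v | YV o v = 0} := by
      ext v; simp [MV, forgetMem]
    rw [this]
    exact measurableSet_eq_fun (measurable_YV o) measurable_const
  | succ n ih =>
    have hset : {v : Fin L → ℝ | YV o v ∈ MV v (n+1)} =
        {v | YV o v = extV v n} ∪
          ({v | YV o v ∈ MV v n} ∩
            ({v | YV o v < extV v n} ∩
              ⋂ o' : Option (Fin L),
                ({v | YV o' v ∈ MV v n}ᶜ ∪ {v | YV o v ≤ YV o' v}))ᶜ) := by
      ext v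
      simp only [Set.mem_union, Set.mem_inter_iff, Set.mem_compl_iff, Set.mem_iInter,
        Set.mem_setOf_eq]
      have : MV v (n+1) = forgetStep (MV v n) (extV v n) := rfl
      rw [this, mem_forgetStep_iff (MV v n) (forgetMem_nonempty (extV v) n) (extV v n) (YV o v),
        min_char]
      constructor
      · rintro (h | ⟨h1, h2⟩)
        · exact Or.inl h
        · refine Or.inr ⟨h1, fun ⟨ha, hb⟩ => h2 ⟨ha, fun o' ho' => ?_⟩⟩
          rcases hb o' with h' | h'
          · exact absurd ho' h'
          · exact h'
      · rintro (h | ⟨h1, h2⟩)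
        · exact Or.inl h
        · refine Or.inr ⟨h1, fun ⟨ha, hb⟩ => h2 ⟨ha, fun o' =>
            (em (YV o' v ∈ MV v n)).elim (fun hm => Or.inr (hb o' hm)) Or.inl⟩⟩
    rw [hset]
    refine MeasurableSet.union
      (measurableSet_eq_fun (measurable_YV o) (measurable_extV n)) ?_
    refine (ih o).inter (MeasurableSet.compl ?_)
    refine (measurableSet_lt (measurable_YV o) (measurable_extV n)).inter ?_
    exact MeasurableSet.iInter fun o' =>
      ((ih o').compl).union (measurableSet_le (measurable_YV o) (measurable_YV o'))

variable (x : ℝ)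

/-- the indicator family for counting. -/
def CSet (x : ℝ) : Option (Fin L) → Set (Fin L → ℝ)
  | none => {v | (0:ℝ) ∈ MV v L}
  | some i => {v | v i ∈ MV v L ∧ v i ≤ x ∧ v i ≠ 0 ∧ ∀ j, j < i → v j ≠ v i}

lemma measurableSet_CSet (o : Option (Fin L)) : MeasurableSet (CSet x o) := by
  cases o with
  | none => exact measurableSet_mem_MV L none
  | some i =>
    have h1 : MeasurableSet {v : Fin L → ℝ | v i ∈ MV v L} := measurableSet_mem_MV L (some i)
    have h2 : MeasurableSet {v : Fin L → ℝ | v i ≤ x} :=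
      measurableSet_le (measurable_pi_apply i) measurable_const
    have h3 : MeasurableSet {v : Fin L → ℝ | v i ≠ 0} :=
      (measurableSet_eq_fun (measurable_pi_apply i) measurable_const).compl
    have h4 : MeasurableSet {v : Fin L → ℝ | ∀ j, j < i → v j ≠ v i} := by
      have : {v : Fin L → ℝ | ∀ j, j < i → v j ≠ v i} =
          ⋂ j : Fin L, {v | j < i → v j ≠ v i} := by
        ext v; simp
      rw [this]
      refine MeasurableSet.iInter fun j => ?_
      by_cases hj : j < i
      · have : {v : Fin L → ℝ | j < i → v j ≠ v i} = {v | v j ≠ v i} := by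
          ext v; simp [hj]
        rw [this]
        exact (measurableSet_eq_fun (measurable_pi_apply j) (measurable_pi_apply i)).compl
      · have : {v : Fin L → ℝ | j < i → v j ≠ v i} = Set.univ := by
          ext v; simp [hj]
        rw [this]; exact MeasurableSet.univ
    have : CSet x (some i) = {v : Fin L → ℝ | v i ∈ MV v L} ∩ ({v | v i ≤ x} ∩
        ({v | v i ≠ 0} ∩ {v | ∀ j, j < i → v j ≠ v i})) := by
      ext v; simp [CSet, Set.mem_inter_iff, and_assoc]
    rw [this]
    exact h1.inter (h2.inter (h3.inter h4))

lemma count_identity (hx0 : (0:ℝ) ≤ x) (v : Fin L → ℝ) :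
    (sCount (extV v) x L : ℝ) =
      ∑ o : Option (Fin L), (CSet x o).indicator (fun _ => (1:ℝ)) v := by
  classical
  haveI : DecidablePred (fun o : Option (Fin L) => v ∈ CSet x o) := Classical.decPred _
  set K : Finset (Option (Fin L)) := univ.filter (fun o => v ∈ CSet x o) with hK
  have himg : (MV v L).filter (· ≤ x) = K.image (fun o => YV o v) := by
    ext z
    simp only [mem_filter, mem_image, hK, Finset.mem_filter, Finset.mem_univ, true_and]
    constructor
    · rintro ⟨hzM, hzx⟩
      rcases mem_MV_cases hzM with rfl | ⟨j, rfl⟩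
      · exact ⟨none, hzM, rfl⟩
      · by_cases hz0 : v j = 0
        · refine ⟨none, ?_, hz0.symm⟩
          show (0:ℝ) ∈ MV v L
          rw [← hz0]; exact hzM
        · -- choose minimal index with this value
          have hne : (univ.filter (fun j' : Fin L => v j' = v j)).Nonempty :=
            ⟨j, by simp⟩
          set j₀ := (univ.filter (fun j' : Fin L => v j' = v j)).min' hne with hj₀
          have hj₀v : v j₀ = v j := by
            have := Finset.min'_mem _ hne
            rw [← hj₀] at this
            exact (Finset.mem_filter.1 this).2
          refine ⟨some j₀, ⟨?_, ?_, ?_, ?_⟩, hj₀v⟩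
          · rw [hj₀v]; exact hzM
          · rw [hj₀v]; exact hzx
          · rw [hj₀v]; exact hz0
          · intro j' hj' heq
            have hj'mem : j' ∈ univ.filter (fun j' : Fin L => v j' = v j) :=
              Finset.mem_filter.2 ⟨Finset.mem_univ _, heq.trans hj₀v⟩
            exact absurd (Finset.min'_le _ _ hj'mem) (not_le.2 hj')
    · rintro ⟨o, ho, rfl⟩
      cases o with
      | none => exact ⟨ho, hx0⟩
      | some i => exact ⟨ho.1, ho.2.1⟩
  have hinj : Set.InjOn (fun o => YV o v) (K : Set (Option (Fin L))) := by
    intro o1 h1 o2 h2 heq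
    simp only [hK, Finset.coe_filter, Set.mem_setOf_eq, Finset.mem_univ, true_and] at h1 h2
    match o1, o2 with
    | none, none => rfl
    | none, some i =>
      exact absurd heq.symm h2.2.2.1
    | some i, none =>
      exact absurd heq h1.2.2.1
    | some i, some i' =>
      rcases lt_trichotomy i i' with h | h | h
      · exact absurd heq (h2.2.2.2 i h)
      · rw [h]
      · exact absurd heq.symm (h1.2.2.2 i' h)
  have hcard : sCount (extV v) x L = K.card := by
    rw [sCount]
    have : forgetMem {0} (extV v) L = MV v L := rfl
    rw [this, himg, Finset.card_image_of_injOn hinj]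
  have hsum : ((K.card : ℕ) : ℝ) = ∑ o : Option (Fin L), if v ∈ CSet x o then (1:ℝ) else 0 := by
    rw [hK, Finset.card_filter]
    push_cast
    exact Finset.sum_congr rfl fun o _ => by split_ifs <;> simp
  rw [hcard, hsum]
  exact Finset.sum_congr rfl fun o _ => by
    by_cases h : v ∈ CSet x o <;> simp [h]

lemma sCount_card_le (xs : ℕ → ℝ) (x : ℝ) (n : ℕ) : sCount xs x n ≤ n + 1 := by
  unfold sCount
  calc ((forgetMem {0} xs n).filter (· ≤ x)).card
      ≤ (forgetMem {0} xs n).card := card_filter_le _ _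
    _ ≤ (insert 0 ((Finset.range n).image xs)).card := card_le_card (forgetMem_subset xs n)
    _ ≤ ((Finset.range n).image xs).card + 1 := card_insert_le _ _
    _ ≤ n + 1 :=
        Nat.add_le_add_right (Finset.card_image_le.trans (by simp)) 1

lemma measurable_sCount_ext :
    (0:ℝ) ≤ x → Measurable (fun v : Fin L → ℝ => (sCount (extV v) x L : ℝ)) := by
  intro hx0
  have heq : (fun v : Fin L → ℝ => (sCount (extV v) x L : ℝ))
      = fun v => ∑ o : Option (Fin L), (CSet x o).indicator (fun _ => (1:ℝ)) v :=
    funext fun v => count_identity x hx0 v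
  rw [heq]
  exact Finset.measurable_sum _ fun o _ => measurable_const.indicator (measurableSet_CSet x o)

end Meas


section Prob

variable {ν : Measure ℝ} [IsProbabilityMeasure ν]

/-- bounded differences with constant 2. -/
def BD (n : ℕ) (f : (Fin n → ℝ) → ℝ) : Prop :=
  ∀ (k : Fin n) (v : Fin n → ℝ) (s : ℝ), |f v - f (Function.update v k s)| ≤ 2

lemma integrable_of_bdd {α : Type*} [MeasurableSpace α] {κ : Measure α}
    [IsProbabilityMeasure κ] {u : α → ℝ} (hm : AEStronglyMeasurable u κ) {C : ℝ}
    (hb : ∀ a, |u a| ≤ C) : Integrable u κ :=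
  Integrable.mono' (integrable_const C) hm (Filter.Eventually.of_forall fun a => by
    simpa using hb a)

lemma exp_abs_bdd {y C t c : ℝ} (h : |y| ≤ C) :
    |Real.exp (t * (y - c))| ≤ Real.exp (|t| * (C + |c|)) := by
  rw [abs_of_pos (Real.exp_pos _)]
  refine Real.exp_le_exp.2 ?_
  calc t * (y - c) ≤ |t * (y - c)| := le_abs_self _
    _ = |t| * |y - c| := abs_mul _ _
    _ ≤ |t| * (C + |c|) := by
        refine mul_le_mul_of_nonneg_left ?_ (abs_nonneg t)
        calc |y - c| ≤ |y| + |c| := abs_sub _ _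
          _ ≤ C + |c| := by linarith

/-- mgf bound for a mean-zero variable bounded by 2. -/
lemma mgf_bounded_zero_mean {α : Type*} [MeasurableSpace α] (κ : Measure α)
    [IsProbabilityMeasure κ] (u : α → ℝ) (hm : AEStronglyMeasurable u κ)
    (hb : ∀ a, |u a| ≤ 2) (hmean : ∫ a, u a ∂κ = 0) (t : ℝ) :
    ∫ a, Real.exp (t * u a) ∂κ ≤ Real.exp (2 * t ^ 2) := by
  have hu_int : Integrable u κ := integrable_of_bdd hm hb
  have key : ∀ a, Real.exp (t * u a) ≤
      ((2 - u a) / 4) * Real.exp (-(2 * t)) + ((2 + u a) / 4) * Real.exp (2 * t) := by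
    intro a
    have h1a : -2 ≤ u a := neg_le_of_abs_le (hb a)
    have h1b : u a ≤ 2 := le_of_abs_le (hb a)
    have hc1 : (0:ℝ) ≤ (2 - u a) / 4 := by linarith
    have hc2 : (0:ℝ) ≤ (2 + u a) / 4 := by linarith
    have hcs : (2 - u a) / 4 + (2 + u a) / 4 = 1 := by ring
    have hcx := convexOn_exp.2 (Set.mem_univ (-(2 * t))) (Set.mem_univ (2 * t)) hc1 hc2 hcs
    simp only [smul_eq_mul] at hcx
    have harg : (2 - u a) / 4 * -(2 * t) + (2 + u a) / 4 * (2 * t) = t * u a := by ring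
    rw [harg] at hcx
    exact hcx
  have hint_lhs : Integrable (fun a => Real.exp (t * u a)) κ := by
    refine integrable_of_bdd (C := Real.exp (|t| * 2)) ?_ ?_
    · exact (Real.measurable_exp.comp_aemeasurable
        (aemeasurable_const.mul hm.aemeasurable)).aestronglyMeasurable
    · intro a
      rw [abs_of_pos (Real.exp_pos _)]
      refine Real.exp_le_exp.2 ?_
      calc t * u a ≤ |t * u a| := le_abs_self _
        _ = |t| * |u a| := abs_mul _ _
        _ ≤ |t| * 2 := mul_le_mul_of_nonneg_left (hb a) (abs_nonneg t)
  have hint1 : Integrable (fun a => ((2 - u a) / 4) * Real.exp (-(2 * t))) κ :=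
    (((integrable_const (2:ℝ)).sub hu_int).div_const 4).mul_const _
  have hint2 : Integrable (fun a => ((2 + u a) / 4) * Real.exp (2 * t)) κ :=
    (((integrable_const (2:ℝ)).add hu_int).div_const 4).mul_const _
  calc ∫ a, Real.exp (t * u a) ∂κ
      ≤ ∫ a, (((2 - u a) / 4) * Real.exp (-(2 * t)) + ((2 + u a) / 4) * Real.exp (2 * t)) ∂κ :=
        integral_mono hint_lhs (hint1.add hint2) key
    _ = (∫ a, (2 - u a) ∂κ) / 4 * Real.exp (-(2 * t))
        + (∫ a, (2 + u a) ∂κ) / 4 * Real.exp (2 * t) := by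
        rw [integral_add hint1 hint2, integral_mul_const, integral_mul_const,
          integral_div, integral_div]
    _ = (Real.exp (2*t) + Real.exp (-(2*t))) / 2 := by
        rw [integral_sub (integrable_const _) hu_int,
          integral_add (integrable_const _) hu_int, hmean, integral_const]
        simp only [measure_univ, ENNReal.toReal_one, probReal_univ, smul_eq_mul, one_mul]
        ring
    _ = Real.cosh (2*t) := (Real.cosh_eq _).symm
    _ ≤ Real.exp ((2*t)^2 / 2) := Real.cosh_le_exp_half_sq _
    _ = Real.exp (2 * t^2) := by ring_nf

/-- the product measure. -/
noncomputable def pmeas (ν : Measure ℝ) (n : ℕ) : Measure (Fin n → ℝ) :=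
  Measure.pi fun _ => ν

instance (n : ℕ) : IsProbabilityMeasure (pmeas ν n) := by
  unfold pmeas; infer_instance

/-- the MGF bound for functions of independent variables with bounded differences. -/
lemma mgf_bd : ∀ (n : ℕ) (f : (Fin n → ℝ) → ℝ), Measurable f → ∀ (R : ℝ),
    (∀ v, |f v| ≤ R) → BD n f → ∀ (t : ℝ),
    ∫ v, Real.exp (t * (f v - ∫ w, f w ∂(pmeas ν n))) ∂(pmeas ν n)
      ≤ Real.exp (2 * n * t ^ 2) := by
  intro n
  induction n with
  | zero =>
    intro f hf R hfb hbd t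
    have hconst : ∀ v : Fin 0 → ℝ, f v = f (fun i => i.elim0) := by
      intro v
      congr 1
      funext i
      exact i.elim0
    have hint : ∫ w, f w ∂(pmeas ν 0) = f (fun i => i.elim0) := by
      rw [show (fun w : Fin 0 → ℝ => f w) = (fun _ => f (fun i => i.elim0)) from
        funext hconst]
      simp [integral_const, measure_univ]
    have hone : (fun v : Fin 0 → ℝ => Real.exp (t * (f v - ∫ w, f w ∂(pmeas ν 0))))
        = fun _ => 1 := by
      funext v
      rw [hconst v, hint]
      simp
    rw [hone]
    simp [integral_const, measure_univ]
  | succ n ih =>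
    intro f hf R hfb hbd t
    set c := ∫ w, f w ∂(pmeas ν (n+1)) with hc
    set e := MeasurableEquiv.piFinSuccAbove (fun _ : Fin (n+1) => ℝ) 0 with he
    have hmp : MeasurePreserving e (pmeas ν (n+1)) (ν.prod (pmeas ν n)) :=
      measurePreserving_piFinSuccAbove (fun _ => ν) 0
    have hmps : MeasurePreserving e.symm (ν.prod (pmeas ν n)) (pmeas ν (n+1)) :=
      hmp.symm e
    have hesymm : ∀ p : ℝ × (Fin n → ℝ), e.symm p = Fin.cons p.1 p.2 := by
      intro p
      have h1 : e.symm p = Fin.insertNth 0 p.1 p.2 := rfl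
      rw [h1, Fin.insertNth_zero']
    set h : ℝ × (Fin n → ℝ) → ℝ := fun p => f (Fin.cons p.1 p.2) with hh
    have hcomp : ∀ p, f (e.symm p) = h p := fun p => by rw [hesymm p]
    have hh_meas : Measurable h := by
      have heq : h = f ∘ e.symm := by funext p; exact (hcomp p).symm
      rw [heq]
      exact hf.comp e.symm.measurable
    have hh_bdd : ∀ p, |h p| ≤ R := fun p => hfb _
    set g : (Fin n → ℝ) → ℝ := fun w => ∫ s, h (s, w) ∂ν with hg
    have hg_meas : StronglyMeasurable g := hh_meas.stronglyMeasurable.integral_prod_left'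
    have hsec_meas : ∀ w, Measurable (fun s => h (s, w)) := fun w =>
      hh_meas.comp (measurable_id.prodMk measurable_const)
    have hsec_int : ∀ w, Integrable (fun s => h (s, w)) ν := fun w =>
      integrable_of_bdd (hsec_meas w).aestronglyMeasurable (fun s => hh_bdd _)
    have hg_bdd : ∀ w, |g w| ≤ R := by
      intro w
      have := norm_integral_le_of_norm_le_const (μ := ν) (f := fun s => h (s, w)) (C := R)
        (Filter.Eventually.of_forall fun s => by
          rw [Real.norm_eq_abs]; exact hh_bdd (s, w))
      simpa [measure_univ] using this
    have hdiff2 : ∀ s s' w, |h (s, w) - h (s', w)| ≤ 2 := by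
      intro s s' w
      have hup : (Fin.cons s' w : Fin (n+1) → ℝ) = Function.update (Fin.cons s w) 0 s' :=
        (Fin.update_cons_zero (α := fun _ => ℝ) s w s').symm
      show |f (Fin.cons s w) - f (Fin.cons s' w)| ≤ 2
      rw [hup]
      exact hbd 0 _ _
    have hub : ∀ s w, |h (s, w) - g w| ≤ 2 := by
      intro s w
      have hrw : h (s, w) - g w = ∫ s', (h (s, w) - h (s', w)) ∂ν := by
        rw [integral_sub (integrable_const _) (hsec_int w), integral_const]
        simp [measure_univ, hg]
      rw [hrw]
      have := norm_integral_le_of_norm_le_const (μ := ν)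
        (f := fun s' => h (s, w) - h (s', w)) (C := 2)
        (Filter.Eventually.of_forall fun s' => by
          rw [Real.norm_eq_abs]; exact hdiff2 s s' w)
      simpa [measure_univ] using this
    have hg_bd : BD n g := by
      intro k w s'
      have hrw : g w - g (Function.update w k s') =
          ∫ s, (h (s, w) - h (s, Function.update w k s')) ∂ν := by
        rw [integral_sub (hsec_int w) (hsec_int _)]
      rw [hrw]
      have hptw : ∀ s, |h (s, w) - h (s, Function.update w k s')| ≤ 2 := by
        intro s
        show |f (Fin.cons s w) - f (Fin.cons s (Function.update w k s'))| ≤ 2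
        rw [Fin.cons_update]
        exact hbd k.succ _ _
      have := norm_integral_le_of_norm_le_const (μ := ν)
        (f := fun s => h (s, w) - h (s, Function.update w k s')) (C := 2)
        (Filter.Eventually.of_forall fun s => by
          rw [Real.norm_eq_abs]; exact hptw s)
      simpa [measure_univ] using this
    have hh_int : Integrable h (ν.prod (pmeas ν n)) :=
      integrable_of_bdd hh_meas.aestronglyMeasurable hh_bdd
    have hEg : ∫ w, g w ∂(pmeas ν n) = c := by
      have h1 : ∫ p, h p ∂(ν.prod (pmeas ν n)) = c := by
        rw [hc]
        rw [show (fun p : ℝ × (Fin n → ℝ) => h p) = (fun v => f v) ∘ e.symm from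
          funext fun p => (hcomp p).symm]
        exact hmps.integral_comp' (fun v => f v)
      rw [← h1, integral_prod_symm _ hh_int]
    -- the exp integrand and its properties
    set q : ℝ × (Fin n → ℝ) → ℝ := fun p => Real.exp (t * (h p - c)) with hq
    have hq_meas : Measurable q :=
      Real.measurable_exp.comp ((measurable_const.mul (hh_meas.sub measurable_const)))
    have hq_bdd : ∀ p, |q p| ≤ Real.exp (|t| * (R + |c|)) := fun p => exp_abs_bdd (hh_bdd p)
    have hq_int : Integrable q (ν.prod (pmeas ν n)) :=
      integrable_of_bdd hq_meas.aestronglyMeasurable hq_bdd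
    have hmain : ∫ v, Real.exp (t * (f v - c)) ∂(pmeas ν (n+1))
        = ∫ w, (∫ s, q (s, w) ∂ν) ∂(pmeas ν n) := by
      have h1 : ∫ v, Real.exp (t * (f v - c)) ∂(pmeas ν (n+1))
          = ∫ p, q p ∂(ν.prod (pmeas ν n)) := by
        rw [show (fun p : ℝ × (Fin n → ℝ) => q p)
            = (fun v => Real.exp (t * (f v - c))) ∘ e.symm from
          funext fun p => by simp only [Function.comp_apply, hq, hcomp p]]
        exact (hmps.integral_comp' (fun v => Real.exp (t * (f v - c)))).symm
      rw [h1, integral_prod_symm _ hq_int]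
    -- inner bound
    have hinner : ∀ w, ∫ s, q (s, w) ∂ν
        ≤ Real.exp (t * (g w - c)) * Real.exp (2 * t ^ 2) := by
      intro w
      have hfactor : (fun s => q (s, w))
          = fun s => Real.exp (t * (g w - c)) * Real.exp (t * (h (s, w) - g w)) := by
        funext s
        rw [hq]
        simp only
        rw [← Real.exp_add]
        congr 1
        ring
      rw [hfactor, integral_const_mul]
      refine mul_le_mul_of_nonneg_left ?_ (Real.exp_pos _).le
      refine mgf_bounded_zero_mean ν (fun s => h (s, w) - g w)
        (((hsec_meas w).sub measurable_const).aestronglyMeasurable)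
        (fun s => hub s w) ?_ t
      rw [integral_sub (hsec_int w) (integrable_const _), integral_const]
      simp [measure_univ, hg]
    -- outer bound
    have houter_int1 : Integrable (fun w => ∫ s, q (s, w) ∂ν) (pmeas ν n) := by
      refine integrable_of_bdd (C := Real.exp (|t| * (R + |c|)))
        hq_meas.stronglyMeasurable.integral_prod_left'.aestronglyMeasurable ?_
      intro w
      have := norm_integral_le_of_norm_le_const (μ := ν) (f := fun s => q (s, w))
        (C := Real.exp (|t| * (R + |c|)))
        (Filter.Eventually.of_forall fun s => by
          rw [Real.norm_eq_abs]; exact hq_bdd (s, w))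
      simpa [measure_univ] using this
    have houter_int2 : Integrable
        (fun w => Real.exp (t * (g w - c)) * Real.exp (2 * t ^ 2)) (pmeas ν n) := by
      refine Integrable.mul_const ?_ _
      refine integrable_of_bdd (C := Real.exp (|t| * (R + |c|))) ?_ ?_
      · exact (Real.measurable_exp.comp
          ((measurable_const.mul (hg_meas.measurable.sub measurable_const)))).aestronglyMeasurable
      · exact fun w => exp_abs_bdd (hg_bdd w)
    calc ∫ v, Real.exp (t * (f v - c)) ∂(pmeas ν (n+1))
        = ∫ w, (∫ s, q (s, w) ∂ν) ∂(pmeas ν n) := hmain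
      _ ≤ ∫ w, Real.exp (t * (g w - c)) * Real.exp (2 * t ^ 2) ∂(pmeas ν n) :=
          integral_mono houter_int1 houter_int2 hinner
      _ = Real.exp (2 * t ^ 2) * ∫ w, Real.exp (t * (g w - ∫ w', g w' ∂(pmeas ν n))) ∂(pmeas ν n) := by
          rw [integral_mul_const, hEg]
          ring
      _ ≤ Real.exp (2 * t ^ 2) * Real.exp (2 * n * t ^ 2) := by
          refine mul_le_mul_of_nonneg_left ?_ (Real.exp_pos _).le
          exact ih g hg_meas.measurable R hg_bdd hg_bd t
      _ = Real.exp (2 * (n + 1 : ℕ) * t ^ 2) := by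
          rw [← Real.exp_add]
          congr 1
          push_cast
          ring

/-- one-sided tail bound. -/
lemma tail_one (n : ℕ) (f : (Fin n → ℝ) → ℝ) (hf : Measurable f) (R : ℝ)
    (hfb : ∀ v, |f v| ≤ R) (hbd : BD n f) (a t : ℝ) (ht : 0 < t) :
    pmeas ν n {v | a < f v - ∫ w, f w ∂(pmeas ν n)}
      ≤ ENNReal.ofReal (Real.exp (2 * n * t ^ 2 - t * a)) := by
  set c := ∫ w, f w ∂(pmeas ν n) with hc
  set q : (Fin n → ℝ) → ℝ := fun v => Real.exp (t * (f v - c)) with hq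
  have hq_meas : Measurable q :=
    Real.measurable_exp.comp (measurable_const.mul (hf.sub measurable_const))
  have hq_int : Integrable q (pmeas ν n) :=
    integrable_of_bdd hq_meas.aestronglyMeasurable (fun v => exp_abs_bdd (hfb v))
  have hmarkov := mul_meas_ge_le_integral_of_nonneg
    (Filter.Eventually.of_forall fun v => (Real.exp_pos _).le) hq_int (Real.exp (t * a))
  have hsub : {v : Fin n → ℝ | a < f v - c} ⊆ {v | Real.exp (t * a) ≤ q v} := by
    intro v hv
    exact Real.exp_le_exp.2 (mul_le_mul_of_nonneg_left (le_of_lt hv) ht.le)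
  have hmgf := mgf_bd (ν := ν) n f hf R hfb hbd t
  rw [← hc] at hmgf
  have hle1 : (pmeas ν n {v | a < f v - c}).toReal
      ≤ (pmeas ν n {v | Real.exp (t * a) ≤ q v}).toReal := by
    refine ENNReal.toReal_mono (measure_ne_top _ _) (measure_mono hsub)
  have hle2 : (pmeas ν n {v | Real.exp (t * a) ≤ q v}).toReal
      ≤ Real.exp (2 * n * t ^ 2 - t * a) := by
    have hpos : (0:ℝ) < Real.exp (t * a) := Real.exp_pos _
    have h2 : Real.exp (t * a) * (pmeas ν n {v | Real.exp (t * a) ≤ q v}).toReal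
        ≤ Real.exp (2 * n * t ^ 2) := le_trans hmarkov hmgf
    rw [Real.exp_sub]
    exact (le_div_iff₀ hpos).2 (by rw [mul_comm]; exact h2)
  have hfin : pmeas ν n {v | a < f v - c} ≠ ⊤ := measure_ne_top _ _
  exact (ENNReal.le_ofReal_iff_toReal_le hfin (Real.exp_pos _).le).2 (hle1.trans hle2)

/-- two-sided concentration on the product space. -/
lemma prod_concentration (n : ℕ) (hn : 1 ≤ n) (f : (Fin n → ℝ) → ℝ) (hf : Measurable f)
    (R : ℝ) (hfb : ∀ v, |f v| ≤ R) (hbd : BD n f) (lam : ℝ) (hlam : 0 < lam) :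
    pmeas ν n {v | lam * Real.sqrt n < |f v - ∫ w, f w ∂(pmeas ν n)|}
      ≤ ENNReal.ofReal (2 * Real.exp (-lam ^ 2 / 8)) := by
  have hnpos : (0:ℝ) < n := by exact_mod_cast hn
  have hsqrt : 0 < Real.sqrt n := Real.sqrt_pos.2 hnpos
  set c := ∫ w, f w ∂(pmeas ν n) with hc
  set a := lam * Real.sqrt n with ha
  set t := lam / (4 * Real.sqrt n) with hts
  have ht : 0 < t := div_pos hlam (by positivity)
  have hsq : Real.sqrt n ^ 2 = (n:ℝ) := Real.sq_sqrt (Nat.cast_nonneg n)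
  have hval : 2 * n * t ^ 2 - t * a = -lam ^ 2 / 8 := by
    rw [hts, ha, div_pow, mul_pow]
    rw [show ((4:ℝ))^2 = 16 from by norm_num, hsq]
    field_simp
    ring
  -- upper tail
  have hupper : pmeas ν n {v | a < f v - c}
      ≤ ENNReal.ofReal (Real.exp (-lam ^ 2 / 8)) := by
    have := tail_one (ν := ν) n f hf R hfb hbd a t ht
    rw [← hc, hval] at this
    exact this
  -- lower tail
  have hlower : pmeas ν n {v | a < c - f v}
      ≤ ENNReal.ofReal (Real.exp (-lam ^ 2 / 8)) := by
    set g : (Fin n → ℝ) → ℝ := fun v => -f v with hg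
    have hgint : ∫ w, g w ∂(pmeas ν n) = -c := by
      rw [hg, hc]
      exact integral_neg f
    have hgb : ∀ v, |g v| ≤ R := fun v => by rw [hg]; rw [abs_neg]; exact hfb v
    have hgbd : BD n g := by
      intro k v s
      rw [hg]
      simp only
      rw [show -f v - -f (Function.update v k s) = -(f v - f (Function.update v k s)) from
        by ring, abs_neg]
      exact hbd k v s
    have := tail_one (ν := ν) n g hf.neg R hgb hgbd a t ht
    rw [hgint, hval] at this
    have hseteq : {v : Fin n → ℝ | a < c - f v} = {v | a < g v - -c} := by
      ext v
      simp only [Set.mem_setOf_eq, hg]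
      constructor <;> intro h <;> linarith
    rw [hseteq]
    exact this
  have hsub : {v : Fin n → ℝ | a < |f v - c|}
      ⊆ {v | a < f v - c} ∪ {v | a < c - f v} := by
    intro v hv
    have hv' : a < |f v - c| := hv
    rcases lt_abs.1 hv' with h | h
    · exact Or.inl h
    · exact Or.inr (by simpa using (by linarith : a < c - f v))
  calc pmeas ν n {v | a < |f v - c|}
      ≤ pmeas ν n ({v | a < f v - c} ∪ {v | a < c - f v}) := measure_mono hsub
    _ ≤ pmeas ν n {v | a < f v - c} + pmeas ν n {v | a < c - f v} := measure_union_le _ _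
    _ ≤ ENNReal.ofReal (Real.exp (-lam ^ 2 / 8)) + ENNReal.ofReal (Real.exp (-lam ^ 2 / 8)) :=
        add_le_add hupper hlower
    _ = ENNReal.ofReal (2 * Real.exp (-lam ^ 2 / 8)) := by
        rw [← ENNReal.ofReal_add (Real.exp_pos _).le (Real.exp_pos _).le]
        congr 1
        ring

end Prob


/-- Concentration of the memory count: for `x ∈ [0,1]`, `ℓ ≥ 1` and
`λ > 0`, the probability that `s(x,ℓ)` deviates from its expectation by more than `λ√ℓ`
is at most `2·exp(−λ²/8)`. -/
theorem sCount_concentration {Ω : Type*} [MeasurableSpace Ω] (μ : Measure Ω)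
    [IsProbabilityMeasure μ] (X : ℕ → Ω → ℝ) (hX : IsUnifIID μ X)
    (x : ℝ) (hx : x ∈ Set.Icc (0 : ℝ) 1) (ℓ : ℕ) (hℓ : 1 ≤ ℓ) (lam : ℝ) (hlam : 0 < lam) :
    μ {ω | lam * Real.sqrt ℓ <
        |(sCount (fun i => X i ω) x ℓ : ℝ) - ∫ ω', (sCount (fun i => X i ω') x ℓ : ℝ) ∂μ|}
      ≤ ENNReal.ofReal (2 * Real.exp (-lam ^ 2 / 8)) := by
  classical
  obtain ⟨hXm, hXi, hXd⟩ := hX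
  obtain ⟨hx0, hx1⟩ := hx
  -- the uniform measure on [0,1]
  set ν : Measure ℝ := volume.restrict (Set.Icc (0:ℝ) 1) with hν
  haveI : IsProbabilityMeasure ν := by
    constructor
    rw [hν, Measure.restrict_apply_univ, Real.volume_Icc]
    norm_num
  -- the coordinate map
  set Φ : Ω → (Fin ℓ → ℝ) := fun ω i => X i ω with hΦdef
  have hΦ : Measurable Φ := measurable_pi_lambda _ fun i => hXm i
  -- the function on the product space
  set F : (Fin ℓ → ℝ) → ℝ := fun v => (sCount (extV v) x ℓ : ℝ) with hF
  have hFmeas : Measurable F := measurable_sCount_ext x hx0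
  have hbridge : ∀ ω, F (Φ ω) = (sCount (fun i => X i ω) x ℓ : ℝ) := by
    intro ω
    have hcg : forgetMem {0} (extV (Φ ω)) ℓ = forgetMem {0} (fun i => X i ω) ℓ :=
      forgetMem_congr _ _ _ _ (fun i hi => by simp only [extV, hΦdef, dif_pos hi])
    simp only [hF, sCount, hcg]
  have hFbdd : ∀ v, |F v| ≤ (ℓ : ℝ) + 1 := by
    intro v
    show |(sCount (extV v) x ℓ : ℝ)| ≤ (ℓ : ℝ) + 1
    rw [abs_of_nonneg (by positivity)]
    exact_mod_cast sCount_card_le (extV v) x ℓ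
  have hFbd : BD ℓ F := by
    intro k v s
    show |(sCount (extV v) x ℓ : ℝ) - (sCount (extV (Function.update v k s)) x ℓ : ℝ)| ≤ 2
    refine sCount_lipschitz (extV v) (extV (Function.update v k s)) (k : ℕ) ?_ x ℓ
    intro i hi
    simp only [extV]
    by_cases h : i < ℓ
    · rw [dif_pos h, dif_pos h, Function.update_of_ne]
      exact fun heq => hi (congrArg Fin.val heq)
    · rw [dif_neg h, dif_neg h]
  -- the pushforward is the product measure
  have hmap : pmeas ν ℓ = μ.map Φ := by
    refine Measure.pi_eq fun s hs => ?_
    set sets : ℕ → Set ℝ := fun i => if h : i < ℓ then s ⟨i, h⟩ else Set.univ with hsets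
    have hsets_meas : ∀ i, MeasurableSet (sets i) := by
      intro i
      by_cases h : i < ℓ
      · simpa only [hsets, dif_pos h] using hs ⟨i, h⟩
      · simp only [hsets, dif_neg h]; exact MeasurableSet.univ
    have hpre : Φ ⁻¹' (Set.pi Set.univ s) = ⋂ i ∈ Finset.range ℓ, (X i) ⁻¹' (sets i) := by
      ext ω
      simp only [Set.mem_preimage, Set.mem_pi, Set.mem_univ, true_implies, Set.mem_iInter,
        Finset.mem_range]
      constructor
      · intro h i hi
        simp only [hsets, dif_pos hi]
        exact h ⟨i, hi⟩
      · intro h i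
        have h2 := h i i.isLt
        simp only [hsets, dif_pos i.isLt] at h2
        simpa using h2
    have hfac : ∀ i, μ ((X i) ⁻¹' (sets i)) = ν (sets i) := by
      intro i
      rw [← hXd i, Measure.map_apply (hXm i) (hsets_meas i)]
    rw [Measure.map_apply hΦ (MeasurableSet.univ_pi hs), hpre,
      hXi.measure_inter_preimage_eq_mul (Finset.range ℓ)
        (sets := sets) (fun i _ => hsets_meas i)]
    rw [show (∏ i ∈ Finset.range ℓ, μ (X i ⁻¹' sets i))
        = ∏ i ∈ Finset.range ℓ, ν (sets i) from
      Finset.prod_congr rfl fun i _ => hfac i]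
    rw [← Fin.prod_univ_eq_prod_range (fun i => ν (sets i)) ℓ]
    refine (Finset.prod_congr rfl fun i _ => ?_).symm
    simp only [hsets, dif_pos i.isLt]
  -- transfer the expectation
  have hIeq : ∫ ω', (sCount (fun i => X i ω') x ℓ : ℝ) ∂μ = ∫ v, F v ∂(pmeas ν ℓ) := by
    rw [hmap, integral_map hΦ.aemeasurable hFmeas.aestronglyMeasurable]
    exact (integral_congr_ae (Filter.Eventually.of_forall fun ω => hbridge ω)).symm
  set I := ∫ ω', (sCount (fun i => X i ω') x ℓ : ℝ) ∂μ with hI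
  -- transfer the event
  have hevent : {ω | lam * Real.sqrt ℓ < |(sCount (fun i => X i ω) x ℓ : ℝ) - I|}
      = Φ ⁻¹' {v | lam * Real.sqrt ℓ < |F v - I|} := by
    ext ω
    simp only [Set.mem_setOf_eq, Set.mem_preimage, hbridge ω]
  have hEmeas : MeasurableSet {v : Fin ℓ → ℝ | lam * Real.sqrt ℓ < |F v - I|} :=
    measurableSet_lt measurable_const ((hFmeas.sub measurable_const).abs)
  rw [hevent, ← Measure.map_apply hΦ hEmeas, ← hmap]
  have hfinal := prod_concentration (ν := ν) ℓ hℓ F hFmeas ((ℓ : ℝ) + 1) hFbdd hFbd lam hlam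
  rw [← hIeq] at hfinal
  exact hfinal
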